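/- Let W be a 5-dimensional complex vector space, Q the rank-3 universal quotient bundle on G(2, W), and K = ker(∧²W ⊗ O → ∧²Q). Let Σ ⊂ ℙ(∧²W ⊕ ∧²W) be the image of ℙ_{G(2,W)}(K ⊕ O(-1)) under the tautological map. Then Σ coincides, as a reduced subset, with {[q, p] ∈ ℙ(∧²W ⊕ ∧²W) : p ∧ p = 0 and q ∧ p = 0 in ∧⁴W}. -/

import Mathlib

set_option maxHeartbeats 1600000

open ExteriorAlgebra LinearAlgebra.Projectivization
open scoped LinearAlgebra.Projectivization

section Aux

variable {W : Type*} [AddCommGroup W] [Module ℂ W]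

noncomputable def ctr (d : Module.Dual ℂ W) : ExteriorAlgebra ℂ W →ₗ[ℂ] ExteriorAlgebra ℂ W :=
  CliffordAlgebra.contractLeft d

theorem ctr_ι (d : Module.Dual ℂ W) (x : W) : ctr d (ι ℂ x) = algebraMap ℂ _ (d x) :=
  CliffordAlgebra.contractLeft_ι (Q := 0) (d := d) x

theorem ctr_ι_mul (d : Module.Dual ℂ W) (a : W) (b : ExteriorAlgebra ℂ W) :
    ctr d (ι ℂ a * b) = d a • b - ι ℂ a * ctr d b :=
  CliffordAlgebra.contractLeft_ι_mul (Q := 0) (d := d) a b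

theorem ι_mul_neg_swap (x y : W) : ι ℂ x * ι ℂ y = - (ι ℂ y * ι ℂ x) := by
  rw [eq_neg_iff_add_eq_zero]; exact ι_add_mul_swap x y

theorem mem2 {z : ExteriorAlgebra ℂ W} (h : z ∈ ⋀[ℂ]^2 W) :
    z ∈ LinearMap.range (ι ℂ : W →ₗ[ℂ] _) * LinearMap.range (ι ℂ : W →ₗ[ℂ] _) := by
  rwa [← pow_two]

theorem deg2_induction {P : ExteriorAlgebra ℂ W → Prop}
    (hmul : ∀ a b : W, P (ι ℂ a * ι ℂ b))
    (hadd : ∀ x y, P x → P y → P (x + y))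
    {z : ExteriorAlgebra ℂ W} (hz : z ∈ ⋀[ℂ]^2 W) : P z := by
  refine Submodule.mul_induction_on (mem2 hz) ?_ hadd
  rintro _ ⟨a, rfl⟩ _ ⟨b, rfl⟩
  exact hmul a b

theorem ctr_ι_mul_ι (d : Module.Dual ℂ W) (a b : W) :
    ctr d (ι ℂ a * ι ℂ b) = d a • ι ℂ b - d b • ι ℂ a := by
  rw [ctr_ι_mul, ctr_ι, ← Algebra.commutes, ← Algebra.smul_def]

theorem ctr_mul_deg2 (d : Module.Dual ℂ W) {z : ExteriorAlgebra ℂ W} (hz : z ∈ ⋀[ℂ]^2 W)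
    (w : ExteriorAlgebra ℂ W) : ctr d (z * w) = ctr d z * w + z * ctr d w := by
  refine deg2_induction (P := fun z => ctr d (z * w) = ctr d z * w + z * ctr d w) ?_ ?_ hz
  · intro a b
    rw [mul_assoc, ctr_ι_mul, ctr_ι_mul, ctr_ι_mul_ι]
    simp only [mul_sub, sub_mul, smul_mul_assoc, mul_smul_comm, smul_sub, mul_assoc]
    abel
  · intro x y hx hy; simp only [add_mul, map_add, hx, hy]; abel

theorem ctr_mem_deg1 (d : Module.Dual ℂ W) {z : ExteriorAlgebra ℂ W} (hz : z ∈ ⋀[ℂ]^2 W) :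
    ctr d z ∈ LinearMap.range (ι ℂ : W →ₗ[ℂ] _) := by
  refine deg2_induction (P := fun z => ctr d z ∈ LinearMap.range (ι ℂ : W →ₗ[ℂ] _)) ?_ ?_ hz
  · intro a b
    rw [ctr_ι_mul_ι]
    exact sub_mem (Submodule.smul_mem _ _ (LinearMap.mem_range_self _ b))
      (Submodule.smul_mem _ _ (LinearMap.mem_range_self _ a))
  · intro x y hx hy; rw [map_add]; exact add_mem hx hy

theorem comm_deg2 (x : W) {z : ExteriorAlgebra ℂ W} (hz : z ∈ ⋀[ℂ]^2 W) :
    ι ℂ x * z = z * ι ℂ x := by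
  refine deg2_induction (P := fun z => ι ℂ x * z = z * ι ℂ x) ?_ ?_ hz
  · intro a b
    rw [← mul_assoc, ι_mul_neg_swap x a, neg_mul, mul_assoc, ι_mul_neg_swap x b, mul_neg,
      neg_neg, ← mul_assoc]
  · intro u v hu hv; rw [mul_add, add_mul, hu, hv]

theorem ctr_ctr_ι_mul_ι (d₁ d₂ : Module.Dual ℂ W) (a b : W) :
    ctr d₂ (ctr d₁ (ι ℂ a * ι ℂ b)) = algebraMap ℂ _ (d₁ a * d₂ b - d₁ b * d₂ a) := by
  rw [ctr_ι_mul_ι, map_sub, map_smul, map_smul, ctr_ι, ctr_ι, map_sub]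
  rw [Algebra.smul_def, Algebra.smul_def, ← map_mul, ← map_mul]

theorem ctr_ctr_scalar (d₁ d₂ : Module.Dual ℂ W) {z : ExteriorAlgebra ℂ W} (hz : z ∈ ⋀[ℂ]^2 W) :
    ∃ r : ℂ, ctr d₂ (ctr d₁ z) = algebraMap ℂ _ r := by
  refine deg2_induction (P := fun z => ∃ r : ℂ, ctr d₂ (ctr d₁ z) = algebraMap ℂ _ r) ?_ ?_ hz
  · intro a b; exact ⟨_, ctr_ctr_ι_mul_ι d₁ d₂ a b⟩
  · intro x y hx hy
    obtain ⟨r, hr⟩ := hx; obtain ⟨s, hs⟩ := hy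
    exact ⟨r + s, by rw [map_add, map_add, hr, hs, map_add]⟩

theorem ctr_ctr_antisym (d₁ d₂ : Module.Dual ℂ W) {z : ExteriorAlgebra ℂ W}
    (hz : z ∈ ⋀[ℂ]^2 W) : ctr d₂ (ctr d₁ z) = - ctr d₁ (ctr d₂ z) := by
  refine deg2_induction (P := fun z => ctr d₂ (ctr d₁ z) = - ctr d₁ (ctr d₂ z)) ?_ ?_ hz
  · intro a b; rw [ctr_ctr_ι_mul_ι, ctr_ctr_ι_mul_ι, ← map_neg]; ring_nf
  · intro x y hx hy; simp only [map_add, hx, hy]; abel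

theorem hsum1 {κ : Type*} [Fintype κ] (e : Module.Basis κ ℂ W) (u : W) :
    ∑ i, e.coord i u • ι ℂ (e i) = ι ℂ u := by
  conv_rhs => rw [← e.sum_repr u]
  rw [map_sum]
  simp_rw [map_smul, Module.Basis.coord_apply]

theorem recon {κ : Type*} [Fintype κ] (e : Module.Basis κ ℂ W) {z : ExteriorAlgebra ℂ W}
    (hz : z ∈ ⋀[ℂ]^2 W) :
    z = (2:ℂ)⁻¹ • ∑ i, ∑ j, ctr (e.coord j) (ctr (e.coord i) z) * (ι ℂ (e i) * ι ℂ (e j)) := by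
  refine deg2_induction (P := fun z =>
    z = (2:ℂ)⁻¹ • ∑ i, ∑ j, ctr (e.coord j) (ctr (e.coord i) z) * (ι ℂ (e i) * ι ℂ (e j)))
    ?_ ?_ hz
  · intro a b
    have key : ∀ u v : W,
        (∑ i, ∑ j, (e.coord i u * e.coord j v) • (ι ℂ (e i) * ι ℂ (e j))) = ι ℂ u * ι ℂ v := by
      intro u v
      simp_rw [← smul_mul_smul_comm]
      rw [← Finset.sum_mul_sum]
      rw [hsum1, hsum1]
    simp_rw [ctr_ctr_ι_mul_ι, map_sub, sub_mul, ← Algebra.smul_def, Finset.sum_sub_distrib]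
    rw [key a b, key b a, ι_mul_neg_swap b a, sub_neg_eq_add, ← two_smul ℂ, smul_smul]
    norm_num
  · intro x y hx hy
    simp only [map_add, add_mul, Finset.sum_add_distrib, smul_add]
    rw [← hx, ← hy]

theorem eq_zero_of_forall_ctr {κ : Type*} [Fintype κ] (e : Module.Basis κ ℂ W)
    {z : ExteriorAlgebra ℂ W} (hz : z ∈ ⋀[ℂ]^2 W) (h : ∀ d, ctr d z = 0) : z = 0 := by
  rw [recon e hz]
  simp [h]

theorem ι_mul_ι_ne_zero (d₁ d₂ : Module.Dual ℂ W) (x y : W)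
    (h : d₁ x * d₂ y - d₁ y * d₂ x ≠ 0) : ι ℂ x * ι ℂ y ≠ 0 := by
  intro h0
  have := ctr_ctr_ι_mul_ι d₁ d₂ x y
  rw [h0, map_zero, map_zero] at this
  exact h ((algebraMap_eq_zero_iff _ _).mp this.symm)

theorem exists_factor (x : W) (hx : x ≠ 0) {z : ExteriorAlgebra ℂ W} (hz : z ∈ ⋀[ℂ]^2 W)
    (h : ι ℂ x * z = 0) : ∃ y, z = ι ℂ x * ι ℂ y := by
  obtain ⟨g, hg⟩ := LinearMap.exists_leftInverse_of_injective
    (LinearMap.toSpanSingleton ℂ W x) (LinearMap.ker_toSpanSingleton ℂ hx)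
  have hgx : g x = 1 := by
    have := LinearMap.congr_fun hg 1
    simpa [LinearMap.toSpanSingleton] using this
  have h2 := ctr_ι_mul g x z
  rw [h, map_zero, hgx, one_smul] at h2
  obtain ⟨y, hy⟩ := ctr_mem_deg1 g hz
  refine ⟨y, ?_⟩
  rw [hy]
  exact sub_eq_zero.mp h2.symm

theorem decomposable [FiniteDimensional ℂ W] {z : ExteriorAlgebra ℂ W} (hz : z ∈ ⋀[ℂ]^2 W)
    (hz0 : z ≠ 0) (hzz : z * z = 0) : ∃ x₁ x₂ : W, z = ι ℂ x₁ * ι ℂ x₂ := by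
  have hd : ∃ d, ctr d z ≠ 0 := by
    by_contra hc
    push_neg at hc
    exact hz0 (eq_zero_of_forall_ctr (Module.finBasis ℂ W) hz hc)
  obtain ⟨d, hd⟩ := hd
  obtain ⟨v, hv⟩ := ctr_mem_deg1 d hz
  have hv0 : v ≠ 0 := by
    rintro rfl
    rw [map_zero] at hv
    exact hd hv.symm
  have hmul := ctr_mul_deg2 d hz z
  rw [hzz, map_zero, ← hv, ← comm_deg2 v hz] at hmul
  have h2 : ι ℂ v * z = 0 := by
    have h3 : (2:ℂ) • (ι ℂ v * z) = 0 := by rw [two_smul]; exact hmul.symm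
    simpa using (smul_eq_zero.mp h3).resolve_left (by norm_num)
  obtain ⟨y, hy⟩ := exists_factor v hv0 hz h2
  exact ⟨v, y, hy⟩

theorem mem_two (a b : W) : ι ℂ a * ι ℂ b ∈ ⋀[ℂ]^2 W := by
  have := Submodule.mul_mem_mul (LinearMap.mem_range_self (ι ℂ : W →ₗ[ℂ] _) a)
    (LinearMap.mem_range_self (ι ℂ : W →ₗ[ℂ] _) b)
  rwa [← pow_two] at this

theorem prod_h1 (a b x : W) : (ι ℂ a * ι ℂ b) * (ι ℂ a * ι ℂ x) = 0 := by
  have hba := ι_mul_neg_swap b a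
  have haa := ι_sq_zero (R := ℂ) a
  calc (ι ℂ a * ι ℂ b) * (ι ℂ a * ι ℂ x)
      = ι ℂ a * (ι ℂ b * ι ℂ a) * ι ℂ x := by noncomm_ring
    _ = ι ℂ a * (-(ι ℂ a * ι ℂ b)) * ι ℂ x := by rw [hba]
    _ = -((ι ℂ a * ι ℂ a) * (ι ℂ b * ι ℂ x)) := by noncomm_ring
    _ = 0 := by rw [haa, zero_mul, neg_zero]

theorem prod_h2 (a b x : W) : (ι ℂ a * ι ℂ b) * (ι ℂ x * ι ℂ a) = 0 := by
  rw [ι_mul_neg_swap x a, mul_neg, prod_h1, neg_zero]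

theorem prod_h3 (a b x : W) : (ι ℂ a * ι ℂ b) * (ι ℂ x * ι ℂ b) = 0 := by
  rw [ι_mul_neg_swap a b, neg_mul, prod_h2, neg_zero]

theorem comm22 (a b : W) {z : ExteriorAlgebra ℂ W} (hz : z ∈ ⋀[ℂ]^2 W) :
    (ι ℂ a * ι ℂ b) * z = z * (ι ℂ a * ι ℂ b) := by
  rw [mul_assoc, comm_deg2 b hz, ← mul_assoc, comm_deg2 a hz, mul_assoc]

theorem sign_e2 (a b c d : W) :
    (ι ℂ b * ι ℂ d) * (ι ℂ a * ι ℂ c) = -((ι ℂ a * ι ℂ b) * (ι ℂ c * ι ℂ d)) := by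
  calc (ι ℂ b * ι ℂ d) * (ι ℂ a * ι ℂ c)
      = (ι ℂ a * ι ℂ c) * (ι ℂ b * ι ℂ d) := (comm22 a c (mem_two b d)).symm
    _ = ι ℂ a * (ι ℂ c * ι ℂ b) * ι ℂ d := by noncomm_ring
    _ = ι ℂ a * (-(ι ℂ b * ι ℂ c)) * ι ℂ d := by rw [ι_mul_neg_swap c b]
    _ = -((ι ℂ a * ι ℂ b) * (ι ℂ c * ι ℂ d)) := by noncomm_ring

theorem sign_e3 (a b c d : W) :
    (ι ℂ c * ι ℂ d) * (ι ℂ a * ι ℂ b) = (ι ℂ a * ι ℂ b) * (ι ℂ c * ι ℂ d) :=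
  comm22 c d (mem_two a b)

theorem ctr_smul_dual (a : ℂ) (d : Module.Dual ℂ W) (w : ExteriorAlgebra ℂ W) :
    ctr (a • d) w = a • ctr d w := by
  show (CliffordAlgebra.contractLeft (Q := (0 : QuadraticForm ℂ W)) (a • d)) w = _
  rw [map_smul]
  rfl

theorem ctr_add_dual (d₁ d₂ : Module.Dual ℂ W) (w : ExteriorAlgebra ℂ W) :
    ctr (d₁ + d₂) w = ctr d₁ w + ctr d₂ w := by
  show (CliffordAlgebra.contractLeft (Q := (0 : QuadraticForm ℂ W)) (d₁ + d₂)) w = _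
  rw [map_add]
  rfl

theorem ctr_sum_dual {κ : Type*} (s : Finset κ) (d : κ → Module.Dual ℂ W)
    (w : ExteriorAlgebra ℂ W) : ctr (∑ i ∈ s, d i) w = ∑ i ∈ s, ctr (d i) w := by
  induction s using Finset.cons_induction with
  | empty =>
    show (CliffordAlgebra.contractLeft (Q := (0 : QuadraticForm ℂ W)) 0) w = _
    rw [map_zero]
    simp
  | cons i s hi ih => rw [Finset.sum_cons, ctr_add_dual, ih, Finset.sum_cons]

theorem exists_ann [FiniteDimensional ℂ W] (hW : Module.finrank ℂ W = 5)
    {z : ExteriorAlgebra ℂ W} (hz : z ∈ ⋀[ℂ]^2 W) :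
    ∃ x₁ x₂ : W, ι ℂ x₁ * ι ℂ x₂ ≠ 0 ∧ z * (ι ℂ x₁ * ι ℂ x₂) = 0 := by
  classical
  set e : Module.Basis (Fin 5) ℂ W := (Module.finBasis ℂ W).reindex (finCongr hW) with he
  -- the skew matrix of double contractions
  set B : Matrix (Fin 5) (Fin 5) ℂ :=
    Matrix.of (fun i j => algebraMapInv (ctr (e.coord j) (ctr (e.coord i) z))) with hBdef
  have hB : ∀ i j, algebraMap ℂ (ExteriorAlgebra ℂ W) (B i j)
      = ctr (e.coord j) (ctr (e.coord i) z) := by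
    intro i j
    obtain ⟨r, hr⟩ := ctr_ctr_scalar (e.coord i) (e.coord j) hz
    rw [hBdef, Matrix.of_apply, hr, algebraMap_leftInverse W r]
  have hskew : ∀ i j, B j i = - B i j := by
    intro i j
    rw [hBdef, Matrix.of_apply, Matrix.of_apply, ctr_ctr_antisym _ _ hz, map_neg]
  have hdet : B.det = 0 := by
    have h1 : B.transpose = -B := by
      ext i j
      rw [Matrix.transpose_apply, Matrix.neg_apply]
      exact hskew i j
    have h2 : B.det = -B.det := by
      conv_lhs => rw [← Matrix.det_transpose, h1, Matrix.det_neg]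
      norm_num
    linear_combination h2 / 2
  obtain ⟨v, hv0, hvB⟩ := (Matrix.exists_mulVec_eq_zero_iff).mpr hdet
  set d : Module.Dual ℂ W := ∑ i, v i • e.coord i with hd
  have hctrd : ∀ w : ExteriorAlgebra ℂ W, w ∈ ⋀[ℂ]^2 W →
      ctr d w = ∑ i, v i • ctr (e.coord i) w := by
    intro w _
    rw [hd, ctr_sum_dual]
    exact Finset.sum_congr rfl fun i _ => ctr_smul_dual (v i) (e.coord i) w
  -- all double contractions against d vanish
  have hj : ∀ j, ctr (e.coord j) (ctr d z) = 0 := by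
    intro j
    rw [hctrd z hz, map_sum]
    have : ∀ i, ctr (e.coord j) (v i • ctr (e.coord i) z)
        = algebraMap ℂ (ExteriorAlgebra ℂ W) (v i * B i j) := by
      intro i
      rw [map_smul, ← hB i j, map_mul, ← Algebra.smul_def]
    rw [Finset.sum_congr rfl fun i _ => this i, ← map_sum]
    have hzero : ∑ i, v i * B i j = 0 := by
      have : ∑ i, v i * B i j = - (B.mulVec v j) := by
        rw [Matrix.mulVec, dotProduct, ← Finset.sum_neg_distrib]
        exact Finset.sum_congr rfl fun i _ => by rw [hskew j i]; ring
      rw [this, hvB]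
      simp
    rw [hzero, map_zero]
  have hctrdz : ctr d z = 0 := by
    obtain ⟨w, hw⟩ := ctr_mem_deg1 d hz
    have hwz : w = 0 := by
      have hcoord : ∀ j, e.coord j w = 0 := by
        intro j
        have := hj j
        rw [← hw, ctr_ι] at this
        exact (algebraMap_eq_zero_iff _ _).mp this
      have : ∀ j, e.repr w j = 0 := fun j => hcoord j
      apply e.repr.injective
      ext j
      simp [this j]
    rw [← hw, hwz, map_zero]
  -- d is nonzero; normalize to get u with d u = 1
  have hdu : ∃ u : W, d u = 1 := by
    obtain ⟨j, hj'⟩ := Function.ne_iff.mp hv0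
    have hj' : v j ≠ 0 := by simpa using hj'
    have hdej : d (e j) = v j := by
      rw [hd, LinearMap.sum_apply]
      rw [Finset.sum_eq_single j]
      · simp [Module.Basis.coord_apply, Module.Basis.repr_self]
      · intro i _ hij
        simp only [LinearMap.smul_apply, Module.Basis.coord_apply, Module.Basis.repr_self,
          Finsupp.single_apply, smul_eq_mul]
        rw [if_neg (Ne.symm hij), mul_zero]
      · simp
    refine ⟨(v j)⁻¹ • e j, ?_⟩
    rw [map_smul, hdej, smul_eq_mul, inv_mul_cancel₀ hj']
  obtain ⟨u, hu⟩ := hdu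
  -- the kernel of d has dimension 4
  have hU4 : Module.finrank ℂ (LinearMap.ker d) = 4 := by
    have hsurj : Function.Surjective d := fun c =>
      ⟨c • u, by rw [map_smul, hu, smul_eq_mul, mul_one]⟩
    have h1 := LinearMap.finrank_range_add_finrank_ker d
    rw [hW, LinearMap.range_eq_top.mpr hsurj, finrank_top, Module.finrank_self] at h1
    omega
  set bU : Module.Basis (Fin 4) ℂ (LinearMap.ker d) :=
    (Module.finBasis ℂ (LinearMap.ker d)).reindex (finCongr hU4) with hbU
  set g : Fin 5 → W := Fin.cons u (fun i => ((bU i : W))) with hg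
  have hg_li : LinearIndependent ℂ g := by
    have h1 : LinearIndependent ℂ (fun i : Fin 4 => ((bU i : W))) :=
      bU.linearIndependent.map' (LinearMap.ker d).subtype (Submodule.ker_subtype _)
    refine h1.fin_cons ?_
    intro hu'
    have hspan : Submodule.span ℂ (Set.range fun i : Fin 4 => ((bU i : W))) ≤ LinearMap.ker d := by
      rw [Submodule.span_le]
      rintro _ ⟨i, rfl⟩
      exact (bU i).2
    have := hspan hu'
    rw [LinearMap.mem_ker, hu] at this
    exact one_ne_zero this
  have hg_span : ⊤ ≤ Submodule.span ℂ (Set.range g) := by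
    intro w _
    have hdecomp : w = d w • u + (w - d w • u) := by module
    have h1 : u ∈ Submodule.span ℂ (Set.range g) :=
      Submodule.subset_span ⟨0, by rw [hg, Fin.cons_zero]⟩
    have h2 : w - d w • u ∈ Submodule.span ℂ (Set.range g) := by
      have hker : w - d w • u ∈ LinearMap.ker d := by
        rw [LinearMap.mem_ker, map_sub, map_smul, hu, smul_eq_mul, mul_one, sub_self]
      have : (⟨w - d w • u, hker⟩ : LinearMap.ker d) = ∑ i, bU.repr ⟨w - d w • u, hker⟩ i • bU i :=
        (bU.sum_repr _).symm
      have h3 := congrArg ((LinearMap.ker d).subtype) this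
      simp only [Submodule.coe_subtype, map_sum, map_smul] at h3
      rw [h3]
      refine Submodule.sum_mem _ fun i _ => Submodule.smul_mem _ _ ?_
      exact Submodule.subset_span ⟨i.succ, by rw [hg, Fin.cons_succ]⟩
    rw [hdecomp]
    exact Submodule.add_mem _ (Submodule.smul_mem _ _ h1) h2
  set f : Module.Basis (Fin 5) ℂ W := Module.Basis.mk hg_li hg_span with hf
  have hfapp : ∀ i, f i = g i := fun i => by rw [hf, Module.Basis.mk_apply]
  have hcoord0 : f.coord 0 = d := by
    apply f.ext
    intro i
    rw [Module.Basis.coord_apply, Module.Basis.repr_self]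
    refine Fin.cases ?_ ?_ i
    · rw [hfapp, hg, Fin.cons_zero, hu, Finsupp.single_apply]
      simp
    · intro k
      rw [hfapp, hg, Fin.cons_succ, Finsupp.single_apply]
      have : ((bU k : W)) ∈ LinearMap.ker d := (bU k).2
      rw [LinearMap.mem_ker] at this
      simp [this, Fin.succ_ne_zero]
  -- scalar coefficients in the adapted basis
  set c : Fin 5 → Fin 5 → ℂ :=
    fun i j => algebraMapInv (ctr (f.coord j) (ctr (f.coord i) z)) with hcdef
  have hcz : ∀ i j, ctr (f.coord j) (ctr (f.coord i) z)
      = algebraMap ℂ (ExteriorAlgebra ℂ W) (c i j) := by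
    intro i j
    obtain ⟨r, hr⟩ := ctr_ctr_scalar (f.coord i) (f.coord j) hz
    have hcr : c i j = r := by
      rw [hcdef]
      simp only
      rw [hr, algebraMap_leftInverse W r]
    rw [hr, hcr]
  have hcanti : ∀ i j, c j i = - c i j := by
    intro i j
    rw [hcdef]
    simp only
    rw [ctr_ctr_antisym _ _ hz, map_neg]
  have h0j : ∀ j, c 0 j = 0 := by
    intro j
    rw [hcdef]
    simp only
    rw [hcoord0, hctrdz, map_zero, map_zero]
  have hi0 : ∀ i, c i 0 = 0 := by
    intro i
    rw [hcdef]
    simp only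
    rw [ctr_ctr_antisym _ _ hz, hcoord0, hctrdz, map_zero, neg_zero, map_zero]
  clear_value f bU g e B d
  clear hf hbU hg he hBdef hd hctrd hj hB hskew hdet hvB hcdef
  have hq6 : z = c 1 2 • (ι ℂ (f 1) * ι ℂ (f 2)) + c 1 3 • (ι ℂ (f 1) * ι ℂ (f 3))
      + c 1 4 • (ι ℂ (f 1) * ι ℂ (f 4)) + c 2 3 • (ι ℂ (f 2) * ι ℂ (f 3))
      + c 2 4 • (ι ℂ (f 2) * ι ℂ (f 4)) + c 3 4 • (ι ℂ (f 3) * ι ℂ (f 4)) := by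
    calc z = (2:ℂ)⁻¹ • ∑ i, ∑ j, ctr (f.coord j) (ctr (f.coord i) z)
        * (ι ℂ (f i) * ι ℂ (f j)) := recon f hz
      _ = _ := by
        simp only [hcz, Fin.sum_univ_five]
        simp only [h0j, hi0, map_zero, zero_mul, ι_sq_zero, mul_zero, add_zero, zero_add]
        rw [ι_mul_neg_swap (f 2) (f 1), ι_mul_neg_swap (f 3) (f 1), ι_mul_neg_swap (f 4) (f 1),
          ι_mul_neg_swap (f 3) (f 2), ι_mul_neg_swap (f 4) (f 2), ι_mul_neg_swap (f 4) (f 3)]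
        rw [show c 2 1 = -(c 1 2) from hcanti 1 2, show c 3 1 = -(c 1 3) from hcanti 1 3,
          show c 4 1 = -(c 1 4) from hcanti 1 4, show c 3 2 = -(c 2 3) from hcanti 2 3,
          show c 4 2 = -(c 2 4) from hcanti 2 4, show c 4 3 = -(c 3 4) from hcanti 3 4]
        simp only [map_neg, neg_mul, mul_neg, neg_neg, ← Algebra.smul_def]
        module
  by_cases h34 : c 3 4 = 0
  · refine ⟨f 1, f 2, ?_, ?_⟩
    · apply ι_mul_ι_ne_zero (f.coord 1) (f.coord 2)
      simp [Module.Basis.coord_apply, Module.Basis.repr_self, Finsupp.single_apply]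
    · rw [hq6]
      simp only [add_mul, smul_mul_assoc, prod_h1, prod_h2, prod_h3, smul_zero, add_zero,
        zero_add, h34, zero_smul]
  · refine ⟨f 1, c 2 4 • f 2 + c 3 4 • f 3, ?_, ?_⟩
    · apply ι_mul_ι_ne_zero (f.coord 1) (f.coord 3)
      simp only [map_add, map_smul, Module.Basis.coord_apply, Module.Basis.repr_self, Finsupp.single_apply]
      simp [h34]
    · rw [hq6]
      have e2 := sign_e2 (f 1) (f 2) (f 3) (f 4)
      have e3 := sign_e3 (f 1) (f 2) (f 3) (f 4)
      simp only [map_add, map_smul, mul_add, mul_smul_comm, add_mul, smul_mul_assoc,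
        prod_h1, prod_h2, prod_h3, smul_zero, add_zero, zero_add, e2, e3]
      module


end Aux

/-- Let `W` be a 5-dimensional complex vector space and `K_{[p]} = {q | q ∧ p = 0}` the
fiber of the kernel of `∧²W ⊗ O → ∧²Q` at a point `[p]` of `G(2, W)` (i.e. at a nonzero
decomposable `p = x₁ ∧ x₂`).  The image `Σ ⊂ ℙ(∧²W ⊕ ∧²W)` of
`ℙ_{G(2,W)}(K ⊕ O(-1))` — the set of points `[(q, t·p)]` with `[p] ∈ G(2, W)`, `q ∧ p = 0`,
`t ∈ ℂ` — coincides, as a set (i.e. with the reduced structure), with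
`{[q, p] | p ∧ p = 0 and q ∧ p = 0 in ∧⁴W}`. -/
theorem sigma_eq_wedge_locus (W : Type*) [AddCommGroup W] [Module ℂ W]
    [FiniteDimensional ℂ W] (hW : Module.finrank ℂ W = 5) :
    {y : ℙ ℂ ((⋀[ℂ]^2 W) × (⋀[ℂ]^2 W)) |
        ∃ (q p : ⋀[ℂ]^2 W) (t : ℂ) (x₁ x₂ : W) (h : (q, t • p) ≠ 0),
          (p : ExteriorAlgebra ℂ W) = ι ℂ x₁ * ι ℂ x₂ ∧ p ≠ 0 ∧
          (q : ExteriorAlgebra ℂ W) * (p : ExteriorAlgebra ℂ W) = 0 ∧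
          y = Projectivization.mk ℂ (q, t • p) h}
      = {y : ℙ ℂ ((⋀[ℂ]^2 W) × (⋀[ℂ]^2 W)) |
          (y.rep.2 : ExteriorAlgebra ℂ W) * (y.rep.2 : ExteriorAlgebra ℂ W) = 0 ∧
          (y.rep.1 : ExteriorAlgebra ℂ W) * (y.rep.2 : ExteriorAlgebra ℂ W) = 0} := by
  ext y
  simp only [Set.mem_setOf_eq]
  constructor
  · rintro ⟨q, p, t, x₁, x₂, h, hp, hpne, hqp, hy⟩
    obtain ⟨a, ha⟩ := Projectivization.exists_smul_eq_mk_rep ℂ (q, t • p) h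
    rw [← hy] at ha
    have h1c : (y.rep.1 : ExteriorAlgebra ℂ W) = (a : ℂ) • (q : ExteriorAlgebra ℂ W) := by
      rw [← ha]
      simp [Units.smul_def]
    have h2c : (y.rep.2 : ExteriorAlgebra ℂ W)
        = ((a : ℂ) * t) • (p : ExteriorAlgebra ℂ W) := by
      rw [← ha]
      simp [Units.smul_def, smul_smul]
    constructor
    · rw [h2c, smul_mul_smul_comm, hp, prod_h1, smul_zero]
    · rw [h1c, h2c, smul_mul_smul_comm, hqp, smul_zero]
  · rintro ⟨h22, h12⟩
    by_cases hp0 : y.rep.2 = 0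
    · have hq0 : y.rep.1 ≠ 0 := by
        intro h1
        exact y.rep_nonzero (Prod.ext h1 hp0)
      obtain ⟨x₁, x₂, hne, hann⟩ := exists_ann hW (y.rep.1).2
      refine ⟨y.rep.1, ⟨ι ℂ x₁ * ι ℂ x₂, mem_two x₁ x₂⟩, 0, x₁, x₂, ?_, rfl, ?_, hann, ?_⟩
      · simp [Prod.ext_iff, hq0]
      · intro hzero
        apply hne
        have := congrArg (Subtype.val) hzero
        simpa using this
      · conv_lhs => rw [← Projectivization.mk_rep y]
        rw [Projectivization.mk_eq_mk_iff]
        refine ⟨1, ?_⟩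
        rw [one_smul, zero_smul]
        exact Prod.ext rfl hp0.symm
    · have hpE : (y.rep.2 : ExteriorAlgebra ℂ W) ≠ 0 := by
        intro hzero
        apply hp0
        exact Subtype.coe_injective (by simpa using hzero)
      obtain ⟨x₁, x₂, hdecomp⟩ := decomposable (y.rep.2).2 hpE h22
      refine ⟨y.rep.1, y.rep.2, 1, x₁, x₂, ?_, hdecomp, hp0, h12, ?_⟩
      · rw [one_smul]
        intro h1
        exact y.rep_nonzero (by rwa [← Prod.mk.eta (p := y.rep)])
      · conv_lhs => rw [← Projectivization.mk_rep y]
        rw [Projectivization.mk_eq_mk_iff]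
        exact ⟨1, by rw [one_smul, one_smul, Prod.mk.eta]⟩
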